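/- Let β > 1, γ ≥ β/2 and M > 0. For every measurable function u : [−π,π] → ℝ with 0 ≤ u(x) ≤ M for almost every x, whose integral I := ∫_{−π}^{π} u(x) dx satisfies I > 0 and 2I ≥ β M^{2γ−β}, one has ∫_{−π}^{π} [ (β−1) u(x)^β / I^{β} − ((β−1)β/2) u(x)^{2γ} / I^{β+1} ] dx ≥ (2π)^{1−β} (β−1) (1 − β M^{2γ−β} / (2I)). -/

import Mathlib

open Real MeasureTheory

/-- The drift estimate (5.22)-(5.25) in the proof of Lemma 5.5: for `β > 1`, `γ ≥ β/2`,
`M > 0` and every measurable `u : [-π,π] → ℝ` with `0 ≤ u ≤ M` a.e. whose integral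
`I := ∫_{-π}^{π} u` satisfies `I > 0` and `2I ≥ β M^{2γ-β}`, one has
`∫_{-π}^{π} [(β-1) u^β / I^β - ((β-1)β/2) u^{2γ} / I^{β+1}]
  ≥ (2π)^{1-β} (β-1) (1 - β M^{2γ-β} / (2I))`. -/
theorem drift_estimate_superlinear_case (β γ M : ℝ) (hβ : 1 < β) (hγ : β / 2 ≤ γ)
    (hM : 0 < M) (u : ℝ → ℝ) (hu : Measurable u)
    (hbound : ∀ᵐ x ∂(volume.restrict (Set.Icc (-π) π)), 0 ≤ u x ∧ u x ≤ M)
    (hIpos : 0 < ∫ x in Set.Icc (-π) π, u x)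
    (hI : β * M ^ (2 * γ - β) ≤ 2 * ∫ x in Set.Icc (-π) π, u x) :
    (2 * π) ^ (1 - β) * (β - 1) *
        (1 - β * M ^ (2 * γ - β) / (2 * ∫ x in Set.Icc (-π) π, u x)) ≤
      ∫ x in Set.Icc (-π) π,
        ((β - 1) * u x ^ β / (∫ z in Set.Icc (-π) π, u z) ^ β -
          ((β - 1) * β / 2) * u x ^ (2 * γ) / (∫ z in Set.Icc (-π) π, u z) ^ (β + 1)) := by
  set μ := volume.restrict (Set.Icc (-π) π) with hμdef
  set I := ∫ x in Set.Icc (-π) π, u x with hIdef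
  have hπ : (0:ℝ) < 2 * π := by positivity
  have hμuniv : μ Set.univ = ENNReal.ofReal (2 * π) := by
    rw [hμdef, Measure.restrict_apply_univ, Real.volume_Icc]
    ring_nf
  haveI : IsFiniteMeasure μ := ⟨by rw [hμuniv]; exact ENNReal.ofReal_lt_top⟩
  have hμne : μ ≠ 0 := by
    intro h
    rw [h] at hμuniv
    simp only [Measure.coe_zero, Pi.zero_apply] at hμuniv
    have : (0:ℝ) < 2 * π := hπ
    rw [eq_comm, ENNReal.ofReal_eq_zero] at hμuniv
    linarith
  haveI : NeZero μ := ⟨hμne⟩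
  -- basic positivity facts
  have hβ0 : (0:ℝ) < β := by linarith
  have hIne : I ≠ 0 := hIpos.ne'
  have hmrpow : ∀ p : ℝ, 0 ≤ p → Measurable fun x => u x ^ p := fun p hp =>
    (Real.continuous_rpow_const hp).measurable.comp hu
  have hIβ : (0:ℝ) < I ^ β := rpow_pos_of_pos hIpos β
  have hIβ1 : (0:ℝ) < I ^ (β + 1) := rpow_pos_of_pos hIpos (β + 1)
  have hC : 0 ≤ 1 - β * M ^ (2 * γ - β) / (2 * I) := by
    have h2I : (0:ℝ) < 2 * I := by linarith
    have := div_le_one_of_le₀ hI h2I.le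
    linarith
  -- integrability
  have hub : Integrable (fun x => u x ^ β) μ := by
    refine (integrable_const (M ^ β)).mono' (hmrpow β hβ0.le).aestronglyMeasurable ?_
    filter_upwards [hbound] with x ⟨h0, h1⟩
    rw [Real.norm_eq_abs, abs_of_nonneg (rpow_nonneg h0 β)]
    exact rpow_le_rpow h0 h1 hβ0.le
  have hug : Integrable (fun x => u x ^ (2 * γ)) μ := by
    refine (integrable_const (M ^ (2*γ))).mono' (hmrpow (2*γ) (by linarith)).aestronglyMeasurable ?_
    filter_upwards [hbound] with x ⟨h0, h1⟩
    rw [Real.norm_eq_abs, abs_of_nonneg (rpow_nonneg h0 _)]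
    exact rpow_le_rpow h0 h1 (by linarith)
  have hf : Integrable (fun x =>
      (β - 1) * u x ^ β / I ^ β - ((β - 1) * β / 2) * u x ^ (2 * γ) / I ^ (β + 1)) μ := by
    have h1 : Integrable (fun x => (β - 1) / I ^ β * u x ^ β) μ := hub.const_mul _
    have h2 : Integrable (fun x => ((β - 1) * β / 2) / I ^ (β + 1) * u x ^ (2 * γ)) μ :=
      hug.const_mul _
    refine (h1.sub h2).congr ?_
    filter_upwards with x
    simp only [Pi.sub_apply]; ring
  -- Jensen: (2π)^(1-β) * I^β ≤ ∫ u^β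
  have hjensen : (2 * π) ^ (1 - β) * I ^ β ≤ ∫ x, u x ^ β ∂μ := by
    have hconv : ConvexOn ℝ (Set.Ici 0) fun x : ℝ => x ^ β := convexOn_rpow hβ.le
    have hcont : ContinuousOn (fun x : ℝ => x ^ β) (Set.Ici 0) :=
      (Real.continuous_rpow_const hβ0.le).continuousOn
    have hui : Integrable u μ := by
      refine (integrable_const M).mono' hu.aestronglyMeasurable ?_
      filter_upwards [hbound] with x ⟨h0, h1⟩
      rw [Real.norm_eq_abs, abs_of_nonneg h0]; exact h1
    have hmem : ∀ᵐ x ∂μ, u x ∈ Set.Ici (0:ℝ) := by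
      filter_upwards [hbound] with x ⟨h0, _⟩ using h0
    have := hconv.map_average_le hcont isClosed_Ici hmem hui hub
    rw [average_eq, average_eq, measureReal_def, hμuniv, ENNReal.toReal_ofReal hπ.le, smul_eq_mul,
      smul_eq_mul, ← hIdef] at this
    -- this : ((2π)⁻¹ * I) ^ β ≤ (2π)⁻¹ * ∫ u^β
    have hrw : ((2 * π)⁻¹ * I) ^ β = (2 * π)⁻¹ ^ β * I ^ β :=
      Real.mul_rpow (by positivity) hIpos.le
    rw [hrw] at this
    have h2 : (2 * π) * ((2 * π)⁻¹ ^ β * I ^ β) ≤ (2 * π) * ((2*π)⁻¹ * ∫ x, u x ^ β ∂μ) :=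
      by exact mul_le_mul_of_nonneg_left this hπ.le
    have e1 : (2 * π) ^ (1 - β) = 2 * π * ((2 * π) ^ β)⁻¹ := by
      rw [sub_eq_add_neg, Real.rpow_add hπ, Real.rpow_one, Real.rpow_neg hπ.le]
    have e2 : (2 * π)⁻¹ ^ β = ((2 * π) ^ β)⁻¹ := Real.inv_rpow hπ.le β
    rw [e2] at h2
    calc (2 * π) ^ (1 - β) * I ^ β = (2 * π) * (((2 * π) ^ β)⁻¹ * I ^ β) := by
          rw [e1]; ring
      _ ≤ (2 * π) * ((2*π)⁻¹ * ∫ x, u x ^ β ∂μ) := h2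
      _ = ∫ x, u x ^ β ∂μ := by field_simp
  -- pointwise bound and conclusion
  set C := (β - 1) * (1 - β * M ^ (2 * γ - β) / (2 * I)) with hCdef
  have hC0 : 0 ≤ C := mul_nonneg (by linarith) hC
  have hpt : ∀ᵐ x ∂μ, C * u x ^ β / I ^ β ≤
      (β - 1) * u x ^ β / I ^ β - ((β - 1) * β / 2) * u x ^ (2 * γ) / I ^ (β + 1) := by
    filter_upwards [hbound] with x ⟨h0, h1⟩
    have hsplit : u x ^ (2 * γ) ≤ u x ^ β * M ^ (2 * γ - β) := by
      have : u x ^ (2 * γ) = u x ^ β * u x ^ (2 * γ - β) := by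
        rw [← Real.rpow_add' h0 (by ring_nf; nlinarith)]
        ring_nf
      rw [this]
      exact mul_le_mul_of_nonneg_left (rpow_le_rpow h0 h1 (by linarith)) (rpow_nonneg h0 β)
    have key : ((β - 1) * β / 2) * u x ^ (2 * γ) / I ^ (β + 1) ≤
        ((β - 1) * β / 2) * (M ^ (2 * γ - β) / (2 * I)) * u x ^ β / I ^ β * 2 := by
      rw [Real.rpow_add hIpos β 1, Real.rpow_one]
      rw [div_le_iff₀ (mul_pos hIβ hIpos)]
      have hc2 : (0:ℝ) ≤ (β - 1) * β / 2 := by nlinarith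
      calc ((β - 1) * β / 2) * u x ^ (2*γ) ≤ ((β - 1) * β / 2) * (u x ^ β * M ^ (2*γ-β)) :=
            mul_le_mul_of_nonneg_left hsplit hc2
        _ = ((β - 1) * β / 2) * (M ^ (2*γ-β) / (2 * I)) * u x ^ β / I ^ β * 2 * (I ^ β * I) := by
            field_simp
    rw [hCdef]
    have : (β - 1) * (1 - β * M ^ (2 * γ - β) / (2 * I)) * u x ^ β / I ^ β =
        (β - 1) * u x ^ β / I ^ β -
          ((β - 1) * β / 2) * (M ^ (2 * γ - β) / (2 * I)) * u x ^ β / I ^ β * 2 := by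
      field_simp
    rw [this]
    linarith
  have hmono : ∫ x, C * u x ^ β / I ^ β ∂μ ≤ ∫ x in Set.Icc (-π) π,
      ((β - 1) * u x ^ β / I ^ β - ((β - 1) * β / 2) * u x ^ (2 * γ) / I ^ (β + 1)) := by
    refine integral_mono_ae ?_ hf hpt
    have := (hub.const_mul (C / I ^ β))
    refine this.congr ?_
    filter_upwards with x; ring
  have hleft : (2 * π) ^ (1 - β) * C ≤ ∫ x, C * u x ^ β / I ^ β ∂μ := by
    have : ∫ x, C * u x ^ β / I ^ β ∂μ = C / I ^ β * ∫ x, u x ^ β ∂μ := by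
      rw [← integral_const_mul]
      congr 1; funext x; ring
    rw [this]
    have h1 : C / I ^ β * ((2 * π) ^ (1 - β) * I ^ β) ≤ C / I ^ β * ∫ x, u x ^ β ∂μ :=
      mul_le_mul_of_nonneg_left hjensen (div_nonneg hC0 hIβ.le)
    calc (2 * π) ^ (1 - β) * C = C / I ^ β * ((2 * π) ^ (1 - β) * I ^ β) := by
          field_simp
      _ ≤ _ := h1
  calc (2 * π) ^ (1 - β) * (β - 1) * (1 - β * M ^ (2 * γ - β) / (2 * I))
      = (2 * π) ^ (1 - β) * C := by rw [hCdef]; ring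
    _ ≤ ∫ x, C * u x ^ β / I ^ β ∂μ := hleft
    _ ≤ _ := hmono
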